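/- arXiv:2110.02306 — 4 statements merged into one kernel-verified Lean document; each statement's English description precedes it below -/
import Mathlib

section
/- Let a > 0 and define φ₀(μ) = -μ³(sin(μa)cosh(μa) + cos(μa)sinh(μa)) for complex μ. If μ ≠ 0 and φ₀(μ) = 0, then μ is real or purely imaginary. -/
open Complex Real

theorem zero_of_phi0_real_or_imaginary (a : ℝ) (ha : 0 < a) (μ : ℂ) (hμ : μ ≠ 0)
    (h : -μ ^ 3 * (Complex.sin (μ * a) * Complex.cosh (μ * a)
        + Complex.cos (μ * a) * Complex.sinh (μ * a)) = 0) :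
    μ.im = 0 ∨ μ.re = 0 := by
  set z : ℂ := μ * a with hz
  have key : Complex.sin z * Complex.cosh z + Complex.cos z * Complex.sinh z = 0 := by
    rcases mul_eq_zero.1 h with h' | h'
    · exact absurd (by simpa using h') (pow_ne_zero 3 hμ)
    · exact h'
  have key2 : (1 - Complex.I) * Complex.sin (z + z * Complex.I)
      = -((1 + Complex.I) * Complex.sin (z - z * Complex.I)) := by
    rw [Complex.sin_add, Complex.sin_sub, Complex.sin_mul_I, Complex.cos_mul_I]
    linear_combination 2 * key - 2 * Complex.cos z * Complex.sinh z * Complex.I_sq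
  have hn : Complex.normSq (Complex.sin (z + z * Complex.I))
      = Complex.normSq (Complex.sin (z - z * Complex.I)) := by
    have h1 := congrArg Complex.normSq key2
    rw [map_mul, Complex.normSq_neg, map_mul] at h1
    have e1 : Complex.normSq (1 - Complex.I) = 2 := by
      simp [Complex.normSq_apply]; norm_num
    have e2 : Complex.normSq (1 + Complex.I) = 2 := by
      simp [Complex.normSq_apply]; norm_num
    rw [e1, e2] at h1
    linarith
  -- formula for normSq of sin
  have formula : ∀ w : ℂ, Complex.normSq (Complex.sin w)
      = Real.sin w.re ^ 2 + Real.sinh w.im ^ 2 := by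
    intro w
    rw [Complex.sin_eq]
    simp [Complex.normSq_apply, Complex.sin_ofReal_re, Complex.cos_ofReal_re,
      Complex.sinh_ofReal_re, Complex.cosh_ofReal_re]
    linear_combination Real.sin w.re ^ 2 * Real.cosh_sq w.im
      + Real.sinh w.im ^ 2 * Real.sin_sq_add_cos_sq w.re
  set p := z.re with hp
  set q := z.im with hq
  have r1 : (z + z * Complex.I).re = p - q := by simp [Complex.add_re, Complex.mul_re]; ring
  have i1 : (z + z * Complex.I).im = p + q := by simp [Complex.add_im, Complex.mul_im]; ring
  have r2 : (z - z * Complex.I).re = p + q := by simp [Complex.sub_re, Complex.mul_re]; rfl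
  have i2 : (z - z * Complex.I).im = q - p := by simp [Complex.sub_im, Complex.mul_im]; rfl
  rw [formula, formula, r1, i1, r2, i2] at hn
  -- reduce using Pythagorean-type identities to product equation
  have h4 : Real.sinh p * Real.cosh p * (Real.sinh q * Real.cosh q)
      = Real.sin p * Real.cos p * (Real.sin q * Real.cos q) := by
    rw [Real.sin_sub, Real.sin_add, Real.sinh_add, Real.sinh_sub] at hn
    linear_combination hn / 4
  have hpq : p = 0 ∨ q = 0 := by
    by_contra hc
    push_neg at hc
    obtain ⟨hp0, hq0⟩ := hc
    have hstrict : ∀ x : ℝ, x ≠ 0 →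
        |Real.sin x * Real.cos x| < |Real.sinh x * Real.cosh x| := by
      intro x hx
      rw [abs_mul, abs_mul]
      have h1 : |Real.sin x| * |Real.cos x| ≤ |Real.sin x| := by
        nlinarith [abs_cos_le_one x, abs_nonneg (Real.sin x)]
      have h2 : |Real.sin x| < |Real.sinh x| := by
        calc |Real.sin x| < |x| := Real.abs_sin_lt_abs hx
          _ < Real.sinh |x| := Real.self_lt_sinh_iff.2 (abs_pos.2 hx)
          _ = |Real.sinh x| := (Real.abs_sinh x).symm
      have h3 : |Real.sinh x| ≤ |Real.sinh x| * |Real.cosh x| := by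
        have : (1 : ℝ) ≤ |Real.cosh x| := by
          rw [abs_of_pos (Real.cosh_pos x)]; exact Real.one_le_cosh x
        nlinarith [abs_nonneg (Real.sinh x)]
      linarith
    have hP := hstrict p hp0
    have hQ := hstrict q hq0
    have h6 := mul_lt_mul'' hP hQ (abs_nonneg _) (abs_nonneg _)
    rw [← abs_mul, ← abs_mul, h4] at h6
    exact lt_irrefl _ h6
  have hre : p = μ.re * a := by rw [hp, hz]; simp [Complex.mul_re]
  have him : q = μ.im * a := by rw [hq, hz]; simp [Complex.mul_im]
  rcases hpq with h5 | h5
  · right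
    rw [hre] at h5
    exact (mul_eq_zero.1 h5).resolve_right ha.ne'
  · left
    rw [him] at h5
    exact (mul_eq_zero.1 h5).resolve_right ha.ne'
end

section
/- Let a > 0 and f(μ) = cos(μa)cosh(μa) - 1. For every nonnegative integer m, f has exactly one zero in the interval [(2m + 3/2)π/a, (2m + 2)π/a], and this zero is simple. -/
open Real

private lemma aux_pos_second (m : ℕ) (θ : ℝ) (h1 : (2*(m:ℝ)+3/2)*π ≤ θ)
    (h2 : θ ≤ (2*(m:ℝ)+2)*π) :
    0 < Real.cos θ * Real.sinh θ - Real.sin θ * Real.cosh θ := by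
  have hπ := Real.pi_pos
  have hθpos : 0 < θ := lt_of_lt_of_le (by nlinarith) h1
  have hsinh : 0 < Real.sinh θ := Real.sinh_pos_iff.2 hθpos
  have hcoshpos : 0 < Real.cosh θ := Real.cosh_pos θ
  set φ := θ - ((m:ℝ)+1)*(2*π) with hφdef
  have hθeq : θ = φ + ((m+1 : ℕ):ℝ)*(2*π) := by push_cast; ring
  have hcos : Real.cos θ = Real.cos φ := by
    rw [hθeq, Real.cos_add_nat_mul_two_pi]
  have hsin : Real.sin θ = Real.sin φ := by
    rw [hθeq, Real.sin_add_nat_mul_two_pi]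
  have hφ1 : -(π/2) ≤ φ := by simp only [hφdef]; nlinarith
  have hφ2 : φ ≤ 0 := by simp only [hφdef]; nlinarith
  have hcosφ : 0 ≤ Real.cos φ := Real.cos_nonneg_of_mem_Icc ⟨hφ1, by linarith⟩
  rcases lt_or_eq_of_le hφ2 with hlt | heq
  · have hsinφ : Real.sin φ < 0 := Real.sin_neg_of_neg_of_neg_pi_lt hlt (by linarith)
    rw [hcos, hsin]
    nlinarith
  · rw [hcos, hsin, heq]
    simpa using hsinh

theorem flexible_missile_zero_second_interval (a : ℝ) (ha : 0 < a) (m : ℕ) :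
    (∃! μ : ℝ, μ ∈ Set.Icc ((2 * m + 3 / 2) * Real.pi / a) ((2 * m + 2) * Real.pi / a) ∧
      Real.cos (μ * a) * Real.cosh (μ * a) - 1 = 0) ∧
    (∀ μ ∈ Set.Icc ((2 * m + 3 / 2) * Real.pi / a) ((2 * m + 2) * Real.pi / a),
      Real.cos (μ * a) * Real.cosh (μ * a) - 1 = 0 →
      deriv (fun x : ℝ => Real.cos (x * a) * Real.cosh (x * a) - 1) μ ≠ 0) := by
  have hπ := Real.pi_pos
  set f : ℝ → ℝ := fun x => Real.cos (x * a) * Real.cosh (x * a) - 1 with hf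
  set L : ℝ := (2 * m + 3 / 2) * Real.pi / a with hL
  set R : ℝ := (2 * m + 2) * Real.pi / a with hR
  have hLa : L * a = (2 * (m:ℝ) + 3 / 2) * π := by
    rw [hL]; field_simp
  have hRa : R * a = (2 * (m:ℝ) + 2) * π := by
    rw [hR]; field_simp
  have hLR : L ≤ R := by
    rw [hL, hR]
    exact (div_le_div_iff_of_pos_right ha).2 (by nlinarith)
  have hderiv : ∀ x : ℝ, HasDerivAt f
      (a * (Real.cos (x*a) * Real.sinh (x*a) - Real.sin (x*a) * Real.cosh (x*a))) x := by
    intro x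
    have h1 : HasDerivAt (fun y : ℝ => y * a) a x := hasDerivAt_mul_const a
    have hcos : HasDerivAt (fun y : ℝ => Real.cos (y * a)) (-Real.sin (x*a) * a) x := h1.cos
    have hcosh : HasDerivAt (fun y : ℝ => Real.cosh (y * a)) (Real.sinh (x*a) * a) x := h1.cosh
    have := (hcos.mul hcosh).sub_const 1
    exact this.congr_deriv (by ring)
  have hcont : Continuous f := by fun_prop
  -- bounds for members
  have hbound : ∀ μ, L ≤ μ → μ ≤ R →
      (2*(m:ℝ)+3/2)*π ≤ μ*a ∧ μ*a ≤ (2*(m:ℝ)+2)*π := by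
    intro μ h1 h2
    constructor
    · rw [← hLa]; exact mul_le_mul_of_nonneg_right h1 ha.le
    · rw [← hRa]; exact mul_le_mul_of_nonneg_right h2 ha.le
  have hdpos : ∀ μ, L ≤ μ → μ ≤ R → 0 < deriv f μ := by
    intro μ h1 h2
    rw [(hderiv μ).deriv]
    obtain ⟨hb1, hb2⟩ := hbound μ h1 h2
    exact mul_pos ha (aux_pos_second m _ hb1 hb2)
  have hmono : StrictMonoOn f (Set.Icc L R) := by
    apply strictMonoOn_of_deriv_pos (convex_Icc L R) hcont.continuousOn
    intro x hx
    rw [interior_Icc] at hx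
    exact hdpos x hx.1.le hx.2.le
  -- endpoint values
  have hcosL : Real.cos (L * a) = 0 := by
    rw [hLa]
    have : (2*(m:ℝ)+3/2)*π = (π + π/2) + (m:ℕ)*(2*π) := by push_cast; ring
    rw [this, Real.cos_add_nat_mul_two_pi, Real.cos_add]
    simp
  have hcosR : Real.cos (R * a) = 1 := by
    rw [hRa]
    have : (2*(m:ℝ)+2)*π = 0 + ((m+1:ℕ):ℝ)*(2*π) := by push_cast; ring
    rw [this, Real.cos_add_nat_mul_two_pi, Real.cos_zero]
  have hfL : f L = -1 := by simp [hf, hcosL]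
  have hfR : 0 < f R := by
    simp only [hf, hcosR, one_mul, sub_pos]
    rw [Real.one_lt_cosh]
    rw [hRa]
    positivity
  have hex : ∃ μ ∈ Set.Icc L R, f μ = 0 := by
    have := intermediate_value_Icc hLR hcont.continuousOn
    have h0 : (0:ℝ) ∈ Set.Icc (f L) (f R) := ⟨by rw [hfL]; norm_num, hfR.le⟩
    obtain ⟨μ, hμ, hμ0⟩ := this h0
    exact ⟨μ, hμ, hμ0⟩
  obtain ⟨μ₀, hμ₀mem, hμ₀⟩ := hex
  constructor
  · refine ⟨μ₀, ⟨hμ₀mem, hμ₀⟩, ?_⟩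
    intro y ⟨hymem, hy⟩
    exact hmono.injOn hymem hμ₀mem (by show f y = f μ₀; rw [hμ₀]; exact hy)
  · intro μ hμ _
    exact (hdpos μ hμ.1 hμ.2).ne'
end

section
/- Let a > 0. The zeros μ¹_m ∈ [2mπ/a, (2m+1/2)π/a] and μ²_m ∈ [(2m+3/2)π/a, (2m+2)π/a] of f(μ) = cos(μa)cosh(μa) - 1 satisfy μ¹_m = (2m + 1/2)π/a + o(1) and μ²_m = (2m + 3/2)π/a + o(1) as m → ∞. -/
open Real Filter

lemma sin_small_tendsto (t : ℕ → ℝ) (h0 : ∀ m, 0 ≤ t m) (h1 : ∀ m, t m ≤ π / 2)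
    (hs : Tendsto (fun m => Real.sin (t m)) atTop (nhds 0)) :
    Tendsto t atTop (nhds 0) := by
  have hub : Tendsto (fun m => π / 2 * Real.sin (t m)) atTop (nhds 0) := by
    simpa using hs.const_mul (π / 2)
  refine squeeze_zero h0 (fun m => ?_) hub
  have h := Real.mul_le_sin (h0 m) (h1 m)
  have hπ : (0:ℝ) < π / 2 := by positivity
  have heq : π / 2 * (2 / π * t m) = t m := by
    field_simp
  nlinarith [mul_le_mul_of_nonneg_left h hπ.le]

lemma cosh_inv_tendsto (b : ℕ → ℝ) (hb : Tendsto b atTop atTop) :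
    Tendsto (fun m => (Real.cosh (b m))⁻¹) atTop (nhds 0) := by
  have hcosh : Tendsto (fun m => Real.cosh (b m)) atTop atTop := by
    apply tendsto_atTop_mono (f := fun m => Real.exp (b m) / 2)
    · intro m
      rw [Real.cosh_eq]
      have := Real.exp_pos (-(b m))
      linarith
    · exact (Real.tendsto_exp_atTop.comp hb).atTop_div_const two_pos
  exact hcosh.inv_tendsto_atTop

theorem flexible_missile_zero_asymptotics (a : ℝ) (ha : 0 < a) (μ₁ μ₂ : ℕ → ℝ)
    (hmem₁ : ∀ m : ℕ, μ₁ m ∈ Set.Icc (2 * m * Real.pi / a) ((2 * m + 1 / 2) * Real.pi / a))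
    (hzero₁ : ∀ m : ℕ, Real.cos (μ₁ m * a) * Real.cosh (μ₁ m * a) - 1 = 0)
    (hmem₂ : ∀ m : ℕ, μ₂ m ∈ Set.Icc ((2 * m + 3 / 2) * Real.pi / a) ((2 * m + 2) * Real.pi / a))
    (hzero₂ : ∀ m : ℕ, Real.cos (μ₂ m * a) * Real.cosh (μ₂ m * a) - 1 = 0) :
    Filter.Tendsto (fun m : ℕ => μ₁ m - (2 * m + 1 / 2) * Real.pi / a)
      Filter.atTop (nhds 0) ∧
    Filter.Tendsto (fun m : ℕ => μ₂ m - (2 * m + 3 / 2) * Real.pi / a)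
      Filter.atTop (nhds 0) := by
  have hπ := Real.pi_pos
  -- common: cos (μ m * a) = (cosh (μ m * a))⁻¹
  have hcos : ∀ (μ : ℕ → ℝ), (∀ m, Real.cos (μ m * a) * Real.cosh (μ m * a) - 1 = 0) →
      ∀ m, Real.cos (μ m * a) = (Real.cosh (μ m * a))⁻¹ := by
    intro μ hz m
    have hpos : 0 < Real.cosh (μ m * a) := Real.cosh_pos _
    field_simp
    linarith [hz m]
  -- atTop for arguments
  have hbd : ∀ (μ : ℕ → ℝ), (∀ m, 2 * m * Real.pi / a ≤ μ m) →
      Tendsto (fun m => (Real.cosh (μ m * a))⁻¹) atTop (nhds 0) := by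
    intro μ hlb
    apply cosh_inv_tendsto
    apply tendsto_atTop_mono (f := fun m : ℕ => 2 * m * Real.pi)
    · intro m
      have := hlb m
      calc 2 * m * Real.pi = 2 * m * Real.pi / a * a := by field_simp
        _ ≤ μ m * a := by
          apply mul_le_mul_of_nonneg_right this ha.le
    · apply Tendsto.atTop_mul_const hπ
      exact (tendsto_natCast_atTop_atTop).const_mul_atTop two_pos
  constructor
  · -- μ₁ : set t m = (2m+1/2)π - μ₁ m * a ∈ [0, π/2]
    set t : ℕ → ℝ := fun m => (2 * m + 1 / 2) * Real.pi - μ₁ m * a with ht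
    have h0 : ∀ m, 0 ≤ t m := by
      intro m
      have h := (hmem₁ m).2
      have : μ₁ m * a ≤ (2 * m + 1 / 2) * Real.pi := by
        calc μ₁ m * a ≤ (2 * m + 1 / 2) * Real.pi / a * a :=
          mul_le_mul_of_nonneg_right h ha.le
          _ = (2 * m + 1 / 2) * Real.pi := by field_simp
      simp [ht]; linarith
    have h1 : ∀ m, t m ≤ π / 2 := by
      intro m
      have h := (hmem₁ m).1
      have : 2 * m * Real.pi ≤ μ₁ m * a := by
        calc 2 * m * Real.pi = 2 * m * Real.pi / a * a := by field_simp
          _ ≤ μ₁ m * a := mul_le_mul_of_nonneg_right h ha.le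
      simp only [ht]; nlinarith
    have hsin : ∀ m, Real.sin (t m) = (Real.cosh (μ₁ m * a))⁻¹ := by
      intro m
      have key : Real.cos (μ₁ m * a) = Real.sin (t m) := by
        have e : μ₁ m * a = (π / 2 - t m) + m * (2 * π) := by simp [ht]; ring
        rw [e, Real.cos_add_nat_mul_two_pi, Real.cos_pi_div_two_sub]
      rw [← key]
      exact hcos μ₁ hzero₁ m
    have htend : Tendsto t atTop (nhds 0) := by
      apply sin_small_tendsto t h0 h1
      simp only [hsin]
      exact hbd μ₁ (fun m => (hmem₁ m).1)
    have : (fun m : ℕ => μ₁ m - (2 * m + 1 / 2) * Real.pi / a) =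
        fun m => -(t m) / a := by
      funext m; simp [ht]; field_simp
    rw [this]
    simpa using (htend.neg.div_const a)
  · set t : ℕ → ℝ := fun m => μ₂ m * a - (2 * m + 3 / 2) * Real.pi with ht
    have h0 : ∀ m, 0 ≤ t m := by
      intro m
      have h := (hmem₂ m).1
      have : (2 * m + 3 / 2) * Real.pi ≤ μ₂ m * a := by
        calc (2 * m + 3 / 2) * Real.pi = (2 * m + 3 / 2) * Real.pi / a * a := by field_simp
          _ ≤ μ₂ m * a := mul_le_mul_of_nonneg_right h ha.le
      simp [ht]; linarith
    have h1 : ∀ m, t m ≤ π / 2 := by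
      intro m
      have h := (hmem₂ m).2
      have : μ₂ m * a ≤ (2 * m + 2) * Real.pi := by
        calc μ₂ m * a ≤ (2 * m + 2) * Real.pi / a * a :=
          mul_le_mul_of_nonneg_right h ha.le
          _ = (2 * m + 2) * Real.pi := by field_simp
      simp only [ht]; nlinarith
    have hsin : ∀ m, Real.sin (t m) = (Real.cosh (μ₂ m * a))⁻¹ := by
      intro m
      have key : Real.cos (μ₂ m * a) = Real.sin (t m) := by
        have e : μ₂ m * a = (t m - π / 2) + ((m + 1 : ℕ) : ℝ) * (2 * π) := by
          push_cast; simp [ht]; ring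
        rw [e, Real.cos_add_nat_mul_two_pi, Real.cos_sub_pi_div_two]
      rw [← key]
      exact hcos μ₂ hzero₂ m
    have htend : Tendsto t atTop (nhds 0) := by
      apply sin_small_tendsto t h0 h1
      simp only [hsin]
      apply hbd μ₂
      intro m
      have h := (hmem₂ m).1
      have h2 : 2 * (m:ℝ) * Real.pi / a ≤ (2 * m + 3 / 2) * Real.pi / a := by
        gcongr <;> nlinarith
      linarith
    have : (fun m : ℕ => μ₂ m - (2 * m + 3 / 2) * Real.pi / a) =
        fun m => t m / a := by
      funext m; simp [ht]; field_simp
    rw [this]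
    simpa using htend.div_const a
end

section
/- Let a > 0 and μ a nonzero complex number with cos(μa)cosh(μa) = 1. Then μ⁴ is real and positive; in particular μ is a fourth root of a positive real number. -/
open Complex intervalIntegral

noncomputable def combo (μ P Q R S : ℂ) (x : ℝ) : ℂ :=
  P * Complex.cos (μ * x) + Q * Complex.sin (μ * x)
    + R * Complex.cosh (μ * x) + S * Complex.sinh (μ * x)

lemma hasDerivAt_combo (μ P Q R S : ℂ) (x : ℝ) :
    HasDerivAt (combo μ P Q R S) (combo μ (Q * μ) (-P * μ) (S * μ) (R * μ) x) x := by
  have hin : HasDerivAt (fun t : ℝ => μ * (t : ℂ)) μ x := by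
    simpa using (Complex.ofRealCLM.hasDerivAt (x := x)).const_mul μ
  have hc : HasDerivAt (fun t : ℝ => Complex.cos (μ * t)) (-Complex.sin (μ * x) * μ) x :=
    by have := (Complex.hasDerivAt_cos (μ * x)).scomp x hin
       exact this.congr_deriv (by rw [smul_eq_mul]; ring)
  have hs : HasDerivAt (fun t : ℝ => Complex.sin (μ * t)) (Complex.cos (μ * x) * μ) x :=
    by have := (Complex.hasDerivAt_sin (μ * x)).scomp x hin
       exact this.congr_deriv (by rw [smul_eq_mul]; ring)
  have hch : HasDerivAt (fun t : ℝ => Complex.cosh (μ * t)) (Complex.sinh (μ * x) * μ) x :=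
    by have := (Complex.hasDerivAt_cosh (μ * x)).scomp x hin
       exact this.congr_deriv (by rw [smul_eq_mul]; ring)
  have hsh : HasDerivAt (fun t : ℝ => Complex.sinh (μ * t)) (Complex.cosh (μ * x) * μ) x :=
    by have := (Complex.hasDerivAt_sinh (μ * x)).scomp x hin
       exact this.congr_deriv (by rw [smul_eq_mul]; ring)
  have := (((hc.const_mul P).add (hs.const_mul Q)).add (hch.const_mul R)).add (hsh.const_mul S)
  exact this.congr_deriv (by unfold combo; ring)

lemma continuous_combo (μ P Q R S : ℂ) : Continuous (combo μ P Q R S) := by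
  unfold combo; fun_prop

lemma combo_zero (μ P Q R S : ℂ) : combo μ P Q R S 0 = P + R := by simp [combo]

lemma degenerate_aux (z : ℂ) (hz : z ≠ 0)
    (hA : Complex.sinh z = Complex.sin z) (hB : Complex.cos z = Complex.cosh z) : False := by
  have e1 := Complex.sin_sq_add_cos_sq z
  have e2 := Complex.cosh_sq_sub_sinh_sq z
  rw [hA, ← hB] at e2
  have hsin2 : Complex.sin z ^ 2 = 0 := by linear_combination (e1 - e2) / 2
  have hsin : Complex.sin z = 0 := sq_eq_zero_iff.mp hsin2
  have hsinh : Complex.sinh z = 0 := hA.trans hsin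
  have hcos2 : Complex.cos z ^ 2 = 1 := by linear_combination e1 - hsin2
  have hz1 : Complex.exp z = Complex.cos z := by
    rw [← Complex.cosh_add_sinh z, hsinh, ← hB, add_zero]
  have hz2 : Complex.exp (z * I) = Complex.cos z := by
    rw [Complex.exp_mul_I, hsin, zero_mul, add_zero]
  have he1 : Complex.exp (2 * z) = 1 := by rw [two_mul, Complex.exp_add, hz1, ← sq, hcos2]
  have he2 : Complex.exp (2 * (z * I)) = 1 := by rw [two_mul, Complex.exp_add, hz2, ← sq, hcos2]
  obtain ⟨n, hn⟩ := Complex.exp_eq_one_iff.mp he1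
  obtain ⟨m, hm⟩ := Complex.exp_eq_one_iff.mp he2
  have hz1' : z = (n : ℂ) * Real.pi * I := by linear_combination hn / 2
  have hz2' : z * I = ((m : ℂ) * Real.pi) * I := by linear_combination hm / 2
  have hz2'' : z = (m : ℂ) * Real.pi := mul_right_cancel₀ Complex.I_ne_zero hz2'
  have hre : z.re = 0 := by rw [hz1']; simp
  have him : z.im = 0 := by rw [hz2'']; simp
  exact hz (Complex.ext hre him)

theorem mu_pow_four_real_pos_of_cos_cosh_eq_one (a : ℝ) (ha : 0 < a) (μ : ℂ) (hμ : μ ≠ 0)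
    (h : Complex.cos (μ * a) * Complex.cosh (μ * a) = 1) :
    (μ ^ 4).im = 0 ∧ 0 < (μ ^ 4).re := by
  set z : ℂ := μ * a with hzdef
  have hzne : z ≠ 0 := mul_ne_zero hμ (Complex.ofReal_ne_zero.mpr ha.ne')
  set A : ℂ := Complex.sinh z - Complex.sin z with hAdef
  set B : ℂ := Complex.cos z - Complex.cosh z with hBdef
  set y : ℝ → ℂ := combo μ A B A B with hydef
  set y1 : ℝ → ℂ := combo μ (μ * B) (-(μ * A)) (μ * B) (μ * A) with hy1def
  set y2 : ℝ → ℂ := combo μ (-(μ ^ 2 * A)) (-(μ ^ 2 * B)) (μ ^ 2 * A) (μ ^ 2 * B) with hy2def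
  set y3 : ℝ → ℂ := combo μ (-(μ ^ 3 * B)) (μ ^ 3 * A) (μ ^ 3 * B) (μ ^ 3 * A) with hy3def
  have hy : ∀ x : ℝ, HasDerivAt y (y1 x) x := fun x =>
    (hasDerivAt_combo μ A B A B x).congr_deriv (by simp only [hy1def, combo]; ring)
  have hy1 : ∀ x : ℝ, HasDerivAt y1 (y2 x) x := fun x =>
    (hasDerivAt_combo μ _ _ _ _ x).congr_deriv (by simp only [hy2def, combo]; ring)
  have hy2 : ∀ x : ℝ, HasDerivAt y2 (y3 x) x := fun x =>
    (hasDerivAt_combo μ _ _ _ _ x).congr_deriv (by simp only [hy3def, combo]; ring)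
  have hy3 : ∀ x : ℝ, HasDerivAt y3 (μ ^ 4 * y x) x := fun x =>
    (hasDerivAt_combo μ _ _ _ _ x).congr_deriv (by simp only [hydef, combo]; ring)
  -- boundary values
  have hy20 : y2 0 = 0 := by rw [hy2def, combo_zero]; ring
  have hy30 : y3 0 = 0 := by rw [hy3def, combo_zero]; ring
  have hy2a : y2 a = 0 := by
    simp only [hy2def, combo, ← hzdef, hAdef, hBdef]; ring
  have hy3a : y3 a = 0 := by
    have e1 := Complex.sin_sq_add_cos_sq z
    have e2 := Complex.cosh_sq_sub_sinh_sq z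
    simp only [hy3def, combo, ← hzdef, hAdef, hBdef]
    linear_combination (-(μ ^ 3)) * e2 + (-(μ ^ 3)) * e1 + (2 * μ ^ 3) * h
  -- the concomitant
  set G : ℝ → ℂ := fun x => y3 x * star (y x) - y2 x * star (y1 x) with hGdef
  have hG : ∀ x : ℝ, HasDerivAt G (μ ^ 4 * (y x * star (y x)) - y2 x * star (y2 x)) x := by
    intro x
    have := (((hy3 x).mul ((hy x).star)).sub ((hy2 x).mul ((hy1 x).star)))
    exact this.congr_deriv (by ring)
  have hcy := continuous_combo μ A B A B
  have hcy1 := continuous_combo μ (μ * B) (-(μ * A)) (μ * B) (μ * A)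
  have hcy2 := continuous_combo μ (-(μ ^ 2 * A)) (-(μ ^ 2 * B)) (μ ^ 2 * A) (μ ^ 2 * B)
  have hcy3 := continuous_combo μ (-(μ ^ 3 * B)) (μ ^ 3 * A) (μ ^ 3 * B) (μ ^ 3 * A)
  have hcont : Continuous fun x => μ ^ 4 * (y x * star (y x)) - y2 x * star (y2 x) :=
    (continuous_const.mul (hcy.mul hcy.star)).sub (hcy2.mul hcy2.star)
  have hFTC : ∫ x in (0:ℝ)..a, (μ ^ 4 * (y x * star (y x)) - y2 x * star (y2 x)) = G a - G 0 :=
    intervalIntegral.integral_eq_sub_of_hasDerivAt (fun x _ => hG x) (hcont.intervalIntegrable 0 a)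
  have hGa : G a = 0 := by simp [hGdef, hy2a, hy3a]
  have hG0 : G 0 = 0 := by simp [hGdef, hy20, hy30]
  rw [hGa, hG0, sub_zero] at hFTC
  -- rewrite via normSq
  have e3 : (fun x => μ ^ 4 * (y x * star (y x)) - y2 x * star (y2 x))
      = fun x => μ ^ 4 * ((Complex.normSq (y x) : ℂ)) - ((Complex.normSq (y2 x) : ℂ)) := by
    funext x
    simp [Complex.star_def, Complex.mul_conj]
  rw [e3] at hFTC
  have hint1 : IntervalIntegrable (fun x => μ ^ 4 * ((Complex.normSq (y x) : ℂ)))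
      MeasureTheory.volume 0 a :=
    ((continuous_const.mul (Complex.continuous_ofReal.comp
      (Complex.continuous_normSq.comp hcy))).intervalIntegrable 0 a)
  have hint2 : IntervalIntegrable (fun x => ((Complex.normSq (y2 x) : ℂ)))
      MeasureTheory.volume 0 a :=
    ((Complex.continuous_ofReal.comp
      (Complex.continuous_normSq.comp hcy2)).intervalIntegrable 0 a)
  rw [intervalIntegral.integral_sub hint1 hint2, intervalIntegral.integral_const_mul,
    intervalIntegral.integral_ofReal, intervalIntegral.integral_ofReal] at hFTC
  have hsplit : (μ ^ 4) * ((∫ x in (0:ℝ)..a, Complex.normSq (y x) : ℝ) : ℂ)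
      - ((∫ x in (0:ℝ)..a, Complex.normSq (y2 x) : ℝ) : ℂ) = 0 := hFTC
  set I1 : ℝ := ∫ x in (0:ℝ)..a, Complex.normSq (y x) with hI1def
  set I2 : ℝ := ∫ x in (0:ℝ)..a, Complex.normSq (y2 x) with hI2def
  have hI2nonneg : 0 ≤ I2 :=
    intervalIntegral.integral_nonneg ha.le fun u _ => Complex.normSq_nonneg _
  have hI1pos : 0 < I1 := by
    by_contra hI
    have hzero : ∀ c ∈ Set.Icc (0:ℝ) a, y c = 0 := by
      intro c hc
      by_contra hyc
      exact hI (intervalIntegral.integral_pos ha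
        ((Complex.continuous_normSq.comp hcy).continuousOn)
        (fun u _ => Complex.normSq_nonneg _)
        ⟨c, hc, Complex.normSq_pos.mpr hyc⟩)
    have hA0 : A = 0 := by
      have h0 : y 0 = A + A := by rw [hydef, combo_zero]
      have := hzero 0 ⟨le_refl _, ha.le⟩
      rw [h0] at this
      linear_combination this / 2
    have hB0 : B = 0 := by
      have hu : UniqueDiffWithinAt ℝ (Set.Icc (0:ℝ) a) 0 :=
        (uniqueDiffOn_Icc ha) 0 ⟨le_refl _, ha.le⟩
      have h1 : HasDerivWithinAt y (y1 0) (Set.Icc 0 a) 0 := (hy 0).hasDerivWithinAt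
      have h2 : HasDerivWithinAt y 0 (Set.Icc (0:ℝ) a) 0 :=
        (hasDerivWithinAt_const (0:ℝ) (Set.Icc (0:ℝ) a) (0:ℂ)).congr
          (fun x hx => (hzero x hx)) (hzero 0 ⟨le_refl _, ha.le⟩)
      have := (h1.derivWithin hu).symm.trans (h2.derivWithin hu)
      have h10 : y1 0 = μ * B + μ * B := by rw [hy1def, combo_zero]
      rw [h10] at this
      have : μ * B = 0 := by linear_combination this / 2
      rcases mul_eq_zero.mp this with h' | h'
      · exact absurd h' hμ
      · exact h'
    exact degenerate_aux z hzne (by linear_combination hA0) (by linear_combination hB0)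
  have hkey : (μ ^ 4) * (I1 : ℂ) = (I2 : ℂ) := by linear_combination hsplit
  have him : (μ ^ 4).im = 0 := by
    have := congrArg Complex.im hkey
    simp [Complex.mul_im] at this
    rcases this with h' | h'
    · exact h'
    · exact absurd h' hI1pos.ne'
  refine ⟨him, ?_⟩
  have hre : (μ ^ 4).re * I1 = I2 := by
    have := congrArg Complex.re hkey
    simpa [Complex.mul_re, him] using this
  have hrenonneg : 0 ≤ (μ ^ 4).re := by
    have : (μ ^ 4).re = I2 / I1 := by field_simp [hI1pos.ne'] ; linarith [hre]
    rw [this]; exact div_nonneg hI2nonneg hI1pos.le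
  rcases hrenonneg.lt_or_eq with h' | h'
  · exact h'
  · exfalso
    apply pow_ne_zero 4 hμ
    exact Complex.ext h'.symm him
end
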